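/- Let Ω be a finite probability space, X : Ω → ℕ a random variable counting successes, and let E ⊆ Ω. If for events (S_i)_{i∈I} partitioning the event {X takes value via edge i}, each S_i is independent of a Bernoulli(p_i) outcome, then under the decomposition P(take α | E) = ∑_i P(probe_i | E) * p_i with 0 < p_i ≤ p ≤ 1, one has ((1-p)/p) * P(take α | E) ≤ ∑_i P(probe_i | E) * (1 - p_i) ≤ 1 - P(take α | E). -/

import Mathlib

open Finset

/-- Conditional probability of the event `A` given the event `E`, for a
finite probability space described by a mass function `pr`. -/
noncomputable def condProb {Ω : Type*} [Fintype Ω] [DecidableEq Ω] (pr : Ω → ℝ) (A E : Finset Ω) : ℝ :=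
  (∑ ω ∈ A ∩ E, pr ω) / (∑ ω ∈ E, pr ω)

theorem stmt_5 {Ω : Type*} [Fintype Ω] [DecidableEq Ω] (pr : Ω → ℝ)
    (hpr : ∀ ω, 0 ≤ pr ω) (hsum : ∑ ω, pr ω = 1)
    (E : Finset Ω) (hE : 0 < ∑ ω ∈ E, pr ω)
    {I : Type*} [Fintype I]
    (probe : I → Finset Ω)   -- "OPT's last probe of α is the edge i"
    (take : Finset Ω)        -- "OPT takes α on its last allowed probe"
    (hdisj : ∀ i j, i ≠ j → Disjoint (probe i) (probe j))
    (pi : I → ℝ) (p : ℝ) (hpi0 : ∀ i, 0 < pi i) (hpip : ∀ i, pi i ≤ p) (hp1 : p ≤ 1)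
    -- decomposition over adjacent edges, using independence of the last probe's result:
    (hdecomp : condProb pr take E = ∑ i, condProb pr (probe i) E * pi i) :
    ((1 - p) / p) * condProb pr take E ≤ ∑ i, condProb pr (probe i) E * (1 - pi i) ∧
      ∑ i, condProb pr (probe i) E * (1 - pi i) ≤ 1 - condProb pr take E := by
  classical
  have hc : ∀ i, 0 ≤ condProb pr (probe i) E := fun i =>
    div_nonneg (Finset.sum_nonneg fun ω _ => hpr ω) hE.le
  have hsumc : ∑ i, condProb pr (probe i) E ≤ 1 := by
    unfold condProb
    rw [← Finset.sum_div, div_le_one hE]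
    have hd : (↑(Finset.univ : Finset I) : Set I).PairwiseDisjoint
        (fun i => probe i ∩ E) := by
      intro i _ j _ hij
      exact (hdisj i j hij).mono inter_subset_left inter_subset_left
    rw [← Finset.sum_biUnion hd]
    apply Finset.sum_le_sum_of_subset_of_nonneg
    · intro ω hω
      rcases Finset.mem_biUnion.mp hω with ⟨i, _, hi⟩
      exact (Finset.mem_inter.mp hi).2
    · intro ω _ _; exact hpr ω
  constructor
  · rw [hdecomp, Finset.mul_sum]
    by_cases hI : Nonempty I
    · have hp0 : 0 < p := lt_of_lt_of_le (hpi0 (Classical.arbitrary I)) (hpip _)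
      apply Finset.sum_le_sum
      intro i _
      rw [div_mul_eq_mul_div, div_le_iff₀ hp0]
      have h1 := hpip i
      have h2 := (hpi0 i).le
      have h3 := hc i
      nlinarith
    · simp [Finset.univ_eq_empty_iff.mpr (not_nonempty_iff.mp hI)]
  · have : ∑ i, condProb pr (probe i) E * (1 - pi i)
        = ∑ i, condProb pr (probe i) E - ∑ i, condProb pr (probe i) E * pi i := by
      rw [← Finset.sum_sub_distrib]
      congr 1; ext i; ring
    rw [this, hdecomp]
    linarith
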